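/- Under the null hypothesis with V = Σ + τ_0* B Bᵀ symmetric positive definite, the variance of the score under Y ~ N(0, V) equals the information entry I_{22}: Var(S(Y)) = tr((Zᵀ V^{-1} Z)²)/2, where S(y) = −(1/2)(tr(Zᵀ V^{-1} Z) − yᵀ V^{-1} Z Zᵀ V^{-1} y). -/

import Mathlib

open MeasureTheory Matrix ProbabilityTheory Filter
open Real Set
open scoped Classical

section Aux1D


lemma myIntegrable (k : ℕ) : Integrable (fun x : ℝ => x ^ k * rexp (-(1/2) * x ^ 2)) := by
  have h := integrable_rpow_mul_exp_neg_mul_sq (b := 1/2) (by norm_num)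
    (s := (k : ℝ)) (lt_of_lt_of_le (by norm_num) (Nat.cast_nonneg k))
  simpa [Real.rpow_natCast] using h

lemma myJ0 : ∫ x : ℝ, rexp (-(1/2) * x ^ 2) = √(2 * π) := by
  rw [integral_gaussian]
  congr 1
  ring

lemma myJodd (k : ℕ) (hk : Odd k) : ∫ x : ℝ, x ^ k * rexp (-(1/2) * x ^ 2) = 0 := by
  have h := (Measure.measurePreserving_neg (volume : Measure ℝ)).integral_comp
    (MeasurableEquiv.neg ℝ).measurableEmbedding
    (fun x => x ^ k * rexp (-(1/2) * x ^ 2))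
  simp only [hk.neg_pow, neg_sq, neg_mul, integral_neg] at h
  simp only [show ∀ a : ℝ, -(1/2 * a^2) = -(1/2) * a^2 from fun a => by ring] at h
  linarith

lemma myJrec (k : ℕ) : ∫ x in Ioi (0:ℝ), x ^ (k+2) * rexp (-(1/2) * x ^ 2)
    = (k+1) * ∫ x in Ioi (0:ℝ), x ^ k * rexp (-(1/2) * x ^ 2) := by
  set F : ℝ → ℝ := fun x => -(x ^ (k+1)) * rexp (-(1/2) * x ^ 2) with hF
  have hderiv : ∀ x ∈ Ioi (0:ℝ), HasDerivAt F
      (x ^ (k+2) * rexp (-(1/2) * x ^ 2) - (k+1) * (x ^ k * rexp (-(1/2) * x ^ 2))) x := by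
    intro x _
    have h1 : HasDerivAt (fun x : ℝ => -(x ^ (k+1))) (-((k+1) * x ^ k)) x :=
      (hasDerivAt_pow (k+1) x).neg.congr_deriv (by push_cast; ring)
    have h2 : HasDerivAt (fun x : ℝ => rexp (-(1/2) * x ^ 2))
        (rexp (-(1/2) * x ^ 2) * (-(1/2) * (2 * x))) x := by
      have := ((hasDerivAt_pow 2 x).const_mul (-(1/2) : ℝ)).exp
      convert this using 1
      push_cast; ring
    have : HasDerivAt (fun y => -(y ^ (k+1)) * rexp (-(1/2) * y ^ 2)) _ x := h1.mul h2
    convert this using 1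
    push_cast; ring
  have hcont : ContinuousWithinAt F (Ici 0) 0 := by
    apply Continuous.continuousWithinAt
    fun_prop
  have hint : IntegrableOn (fun x => x ^ (k+2) * rexp (-(1/2) * x ^ 2)
      - (k+1) * (x ^ k * rexp (-(1/2) * x ^ 2))) (Ioi (0:ℝ)) :=
    ((myIntegrable (k+2)).sub ((myIntegrable k).const_mul _)).integrableOn
  have htend : Tendsto F atTop (nhds 0) := by
    have ho := (rpow_mul_exp_neg_mul_sq_isLittleO_exp_neg (b := 1/2) (by norm_num)
      ((k:ℝ)+1)).isBigO.trans_tendsto ?_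
    · have : Tendsto (fun x : ℝ => x ^ (k+1) * rexp (-(1/2) * x ^ 2)) atTop (nhds 0) := by
        apply ho.congr'
        filter_upwards [eventually_gt_atTop (0:ℝ)] with x hx
        rw [← Real.rpow_natCast x (k+1)]
        push_cast
        ring_nf
      simpa [hF, neg_mul] using this.neg
    · have h2 : Tendsto (fun x : ℝ => -(1/2) * x) atTop atBot :=
        (tendsto_id (α := ℝ)).const_mul_atTop_of_neg (by norm_num)
      exact Real.tendsto_exp_atBot.comp h2
  have key := integral_Ioi_of_hasDerivAt_of_tendsto hcont hderiv hint htend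
  have hF0 : F 0 = 0 := by simp [hF]
  rw [integral_sub ((myIntegrable (k+2)).integrableOn) (((myIntegrable k).const_mul _).integrableOn),
    integral_const_mul] at key
  rw [hF0] at key
  linarith

lemma myJeven (k : ℕ) (hk : Even k) : ∫ x : ℝ, x ^ k * rexp (-(1/2) * x ^ 2)
    = 2 * ∫ x in Ioi (0:ℝ), x ^ k * rexp (-(1/2) * x ^ 2) := by
  rw [← integral_comp_abs (f := fun x => x ^ k * rexp (-(1/2) * x ^ 2))]
  congr 1
  funext x
  rw [hk.pow_abs, sq_abs]

lemma myJ2 : ∫ x : ℝ, x ^ 2 * rexp (-(1/2) * x ^ 2) = √(2 * π) := by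
  have h0 := myJeven 0 (by norm_num)
  have h2 := myJeven 2 (by norm_num)
  have hr := myJrec 0
  simp only [pow_zero, one_mul] at h0 hr
  rw [h2, show (0:ℕ)+2 = 2 from rfl] at *
  rw [hr]
  rw [← myJ0, h0]
  push_cast
  ring

lemma myJ4 : ∫ x : ℝ, x ^ 4 * rexp (-(1/2) * x ^ 2) = 3 * √(2 * π) := by
  have h2 := myJeven 2 (by norm_num)
  have h4 := myJeven 4 (by decide)
  have hr := myJrec 2
  rw [show (2:ℕ)+2 = 4 from rfl] at hr
  rw [h4, hr, ← myJ2, h2]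
  push_cast
  ring

/-- transfer of integrals from `gaussianReal 0 1` to Lebesgue. -/
lemma integral_gaussianReal_std (g : ℝ → ℝ) :
    ∫ x, g x ∂(gaussianReal 0 1)
      = (√(2 * π))⁻¹ * ∫ x : ℝ, g x * rexp (-(1/2) * x ^ 2) := by
  rw [gaussianReal_of_var_ne_zero 0 one_ne_zero]
  have hmeas : Measurable fun x => (gaussianPDFReal 0 1 x).toNNReal :=
    (measurable_gaussianPDFReal 0 1).real_toNNReal
  have hpdf : (gaussianPDF 0 1) = fun x => ((gaussianPDFReal 0 1 x).toNNReal : ENNReal) := rfl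
  rw [hpdf, integral_withDensity_eq_integral_smul hmeas]
  rw [← integral_const_mul]
  congr 1
  funext x
  rw [NNReal.smul_def, smul_eq_mul, Real.coe_toNNReal _ (gaussianPDFReal_nonneg 0 1 x)]
  rw [gaussianPDFReal_def]
  simp only [NNReal.coe_one, mul_one, sub_zero]
  rw [show -x^2/(2:ℝ) = -(1/2) * x^2 by ring]
  ring

lemma integrable_gaussianReal_iff (g : ℝ → ℝ) :
    Integrable g (gaussianReal 0 1)
      ↔ Integrable (fun x => g x * gaussianPDFReal 0 1 x) := by
  rw [gaussianReal_of_var_ne_zero 0 one_ne_zero]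
  rw [integrable_withDensity_iff (measurable_gaussianPDF 0 1)
    (Filter.Eventually.of_forall fun x => ENNReal.ofReal_lt_top)]
  refine integrable_congr (Filter.Eventually.of_forall fun x => ?_)
  rw [gaussianPDF_def]
  simp [ENNReal.toReal_ofReal (gaussianPDFReal_nonneg 0 1 x)]

noncomputable def gmom (k : ℕ) : ℝ := ∫ x, x ^ k ∂(gaussianReal 0 1)

lemma integrable_pow_gaussianReal (k : ℕ) :
    Integrable (fun x : ℝ => x ^ k) (gaussianReal 0 1) := by
  rw [integrable_gaussianReal_iff]
  have : (fun x : ℝ => x ^ k * gaussianPDFReal 0 1 x)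
      = fun x => (√(2*π))⁻¹ * (x ^ k * rexp (-(1/2) * x ^ 2)) := by
    funext x
    rw [gaussianPDFReal_def]
    simp only [NNReal.coe_one, mul_one, sub_zero]
    rw [show -x^2/(2:ℝ) = -(1/2) * x^2 by ring]
    ring
  rw [this]
  exact (myIntegrable k).const_mul _

lemma sqrt_two_pi_pos : (0:ℝ) < √(2 * π) := Real.sqrt_pos.mpr (by positivity)

lemma gmom_pow (k : ℕ) : gmom k = (√(2 * π))⁻¹ * ∫ x : ℝ, x ^ k * rexp (-(1/2) * x ^ 2) :=
  integral_gaussianReal_std _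

lemma gmom_zero : gmom 0 = 1 := by
  rw [gmom_pow]
  simp only [pow_zero, one_mul]
  rw [myJ0, inv_mul_cancel₀ sqrt_two_pi_pos.ne']

lemma gmom_one : gmom 1 = 0 := by rw [gmom_pow, myJodd 1 odd_one]; ring

lemma gmom_two : gmom 2 = 1 := by
  rw [gmom_pow, myJ2, inv_mul_cancel₀ sqrt_two_pi_pos.ne']

lemma gmom_three : gmom 3 = 0 := by rw [gmom_pow, myJodd 3 (by decide)]; ring

lemma gmom_four : gmom 4 = 3 := by
  rw [gmom_pow, myJ4, ← mul_assoc, mul_comm _ (3:ℝ), mul_assoc,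
    inv_mul_cancel₀ sqrt_two_pi_pos.ne', mul_one]

end Aux1D

/-- The standard multivariate Gaussian measure `N(0, I_N)` on `ℝ^N`:
the product of `N` i.i.d. standard real Gaussians. -/
noncomputable def stdGaussian (N : ℕ) : Measure (Fin N → ℝ) :=
  Measure.pi fun _ => gaussianReal 0 1

/-- The multivariate Gaussian measure `N(0, V)` on `ℝ^N` for a positive semidefinite
covariance matrix `V`: the pushforward of `N(0, I_N)` under the (unique symmetric psd)
square root of `V`.  (Junk value `0` if `V` is not psd.) -/
noncomputable def gaussian {N : ℕ} (V : Matrix (Fin N) (Fin N) ℝ) : Measure (Fin N → ℝ) :=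
  if h : V.PosSemidef then (stdGaussian N).map (h.1.eigenvectorUnitary.1 *
    diagonal ((√·) ∘ h.1.eigenvalues) *
    (star h.1.eigenvectorUnitary : Matrix (Fin N) (Fin N) ℝ)).mulVec else 0



instance (N : ℕ) : IsProbabilityMeasure (stdGaussian N) := by
  unfold _root_.stdGaussian; infer_instance

lemma std_integral_prod {N : ℕ} (f : Fin N → ℝ → ℝ) :
    ∫ x, ∏ i, f i (x i) ∂(stdGaussian N) = ∏ i, ∫ x, f i x ∂(gaussianReal 0 1) := by
  letI : MeasureSpace ℝ := ⟨gaussianReal 0 1⟩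
  haveI : SigmaFinite (volume : Measure ℝ) := inferInstanceAs (SigmaFinite (gaussianReal 0 1))
  exact integral_fintype_prod_eq_prod (ι := Fin N) (fun _ => f _)

lemma std_integrable_prod {N : ℕ} (f : Fin N → ℝ → ℝ)
    (hf : ∀ i, Integrable (f i) (gaussianReal 0 1)) :
    Integrable (fun x => ∏ i, f i (x i)) (stdGaussian N) := by
  letI : MeasureSpace ℝ := ⟨gaussianReal 0 1⟩
  haveI : SigmaFinite (volume : Measure ℝ) := inferInstanceAs (SigmaFinite (gaussianReal 0 1))
  exact Integrable.fintype_prod hf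

lemma std_integral_pow {N : ℕ} (e : Fin N → ℕ) :
    ∫ x, ∏ m, x m ^ e m ∂(stdGaussian N) = ∏ m, gmom (e m) :=
  std_integral_prod (fun m t => t ^ e m)

lemma std_integrable_pow {N : ℕ} (e : Fin N → ℕ) :
    Integrable (fun x => ∏ m, x m ^ e m) (stdGaussian N) :=
  std_integrable_prod (fun m t => t ^ e m) (fun m => integrable_pow_gaussianReal (e m))

lemma mono2_eq {N : ℕ} (i j : Fin N) (x : Fin N → ℝ) :
    x i * x j = ∏ m, x m ^ ((if m = i then 1 else 0) + (if m = j then 1 else 0)) := by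
  simp only [pow_add, Finset.prod_mul_distrib, pow_ite, pow_one, pow_zero,
    Finset.prod_ite_eq', Finset.mem_univ, if_true]

lemma mono4_eq {N : ℕ} (i j k l : Fin N) (x : Fin N → ℝ) :
    x i * x j * x k * x l = ∏ m, x m ^ ((if m = i then 1 else 0) + (if m = j then 1 else 0)
      + (if m = k then 1 else 0) + (if m = l then 1 else 0)) := by
  simp only [pow_add, Finset.prod_mul_distrib, pow_ite, pow_one, pow_zero,
    Finset.prod_ite_eq', Finset.mem_univ, if_true]

lemma prod_support {N : ℕ} (F : Fin N → ℝ) (S : Finset (Fin N)) (h : ∀ m ∉ S, F m = 1) :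
    ∏ m, F m = ∏ m ∈ S, F m :=
  (Finset.prod_subset (Finset.subset_univ S) (fun m _ hm => h m hm)).symm

lemma isserlis {N : ℕ} (i j k l : Fin N) :
    (∏ m, gmom ((if m = i then 1 else 0) + (if m = j then 1 else 0)
      + (if m = k then 1 else 0) + (if m = l then 1 else 0)))
    = (if i = j then (1:ℝ) else 0) * (if k = l then 1 else 0)
      + (if i = k then 1 else 0) * (if j = l then 1 else 0)
      + (if i = l then 1 else 0) * (if j = k then 1 else 0) := by
  by_cases hij : i = j
  · subst hij
    by_cases hkl : k = l
    · subst hkl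
      by_cases hik : i = k
      · subst hik
        rw [prod_support _ {i} (by
        intro m hm
        simp only [Finset.mem_singleton] at hm
        simp [hm, gmom_zero])]
        simp [gmom_four]
        norm_num
      · rw [prod_support _ {i, k} (by
        intro m hm
        simp only [Finset.mem_insert, Finset.mem_singleton, not_or] at hm
        simp [hm.1, hm.2, gmom_zero])]
        rw [Finset.prod_insert (by simp [hik]), Finset.prod_singleton]
        simp [hik, Ne.symm hik, gmom_two]
    · by_cases hik : i = k
      · subst hik
        have hil : i ≠ l := hkl
        rw [prod_support _ {i, l} (by
        intro m hm
        simp only [Finset.mem_insert, Finset.mem_singleton, not_or] at hm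
        simp [hm.1, hm.2, gmom_zero])]
        rw [Finset.prod_insert (by simp [hil]), Finset.prod_singleton]
        simp [hil, Ne.symm hil, gmom_three, gmom_one, hkl]
      · by_cases hil : i = l
        · subst hil
          rw [prod_support _ {i, k} (by
        intro m hm
        simp only [Finset.mem_insert, Finset.mem_singleton, not_or] at hm
        simp [hm.1, hm.2, gmom_zero])]
          rw [Finset.prod_insert (by simp [hik]), Finset.prod_singleton]
          simp [hik, Ne.symm hik, gmom_three, gmom_one, hkl]
        · rw [prod_support _ {i, k, l} (by
        intro m hm
        simp only [Finset.mem_insert, Finset.mem_singleton, not_or] at hm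
        simp [hm.1, hm.2.1, hm.2.2, gmom_zero])]
          rw [Finset.prod_insert (by simp [hik, hil]),
            Finset.prod_insert (by simp [hkl]), Finset.prod_singleton]
          simp [hik, hil, hkl, Ne.symm hik, Ne.symm hil, gmom_two, gmom_one]
  · by_cases hkl : k = l
    · subst hkl
      by_cases hik : i = k
      · subst hik
        have hji : j ≠ i := Ne.symm hij
        rw [prod_support _ {i, j} (by
        intro m hm
        simp only [Finset.mem_insert, Finset.mem_singleton, not_or] at hm
        simp [hm.1, hm.2, gmom_zero])]
        rw [Finset.prod_insert (by simp [hij]), Finset.prod_singleton]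
        simp [hij, hji, gmom_three, gmom_one]
      · by_cases hjk : j = k
        · subst hjk
          rw [prod_support _ {i, j} (by
        intro m hm
        simp only [Finset.mem_insert, Finset.mem_singleton, not_or] at hm
        simp [hm.1, hm.2, gmom_zero])]
          rw [Finset.prod_insert (by simp [hij]), Finset.prod_singleton]
          simp [hij, Ne.symm hij, gmom_three, gmom_one, hik, Ne.symm hik]
        · rw [prod_support _ {i, j, k} (by
        intro m hm
        simp only [Finset.mem_insert, Finset.mem_singleton, not_or] at hm
        simp [hm.1, hm.2.1, hm.2.2, gmom_zero])]
          rw [Finset.prod_insert (by simp [hij, hik]),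
            Finset.prod_insert (by simp [hjk]), Finset.prod_singleton]
          simp [hij, hik, hjk, Ne.symm hij, Ne.symm hik, Ne.symm hjk, gmom_two, gmom_one]
    · by_cases hik : i = k
      · subst hik
        have hji : j ≠ i := Ne.symm hij
        have hli : l ≠ i := fun h => hkl h.symm
        by_cases hjl : j = l
        · subst hjl
          rw [prod_support _ {i, j} (by
        intro m hm
        simp only [Finset.mem_insert, Finset.mem_singleton, not_or] at hm
        simp [hm.1, hm.2, gmom_zero])]
          rw [Finset.prod_insert (by simp [hij]), Finset.prod_singleton]
          simp [hij, hji, gmom_two]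
        · rw [prod_support _ {i, j, l} (by
        intro m hm
        simp only [Finset.mem_insert, Finset.mem_singleton, not_or] at hm
        simp [hm.1, hm.2.1, hm.2.2, gmom_zero])]
          rw [Finset.prod_insert (by simp [hij, hkl]),
            Finset.prod_insert (by simp [hjl]), Finset.prod_singleton]
          simp [hij, hji, hjl, hli, hkl, Ne.symm hjl, gmom_two, gmom_one]
      · by_cases hil : i = l
        · subst hil
          have hji : j ≠ i := Ne.symm hij
          have hki : k ≠ i := Ne.symm hik
          by_cases hjk : j = k
          · subst hjk
            rw [prod_support _ {i, j} (by
        intro m hm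
        simp only [Finset.mem_insert, Finset.mem_singleton, not_or] at hm
        simp [hm.1, hm.2, gmom_zero])]
            rw [Finset.prod_insert (by simp [hij]), Finset.prod_singleton]
            simp [hij, hji, gmom_two, hik]
          · rw [prod_support _ {i, j, k} (by
        intro m hm
        simp only [Finset.mem_insert, Finset.mem_singleton, not_or] at hm
        simp [hm.1, hm.2.1, hm.2.2, gmom_zero])]
            rw [Finset.prod_insert (by simp [hij, hik]),
              Finset.prod_insert (by simp [hjk]), Finset.prod_singleton]
            simp [hij, hji, hik, hki, hjk, Ne.symm hjk, gmom_two, gmom_one]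
        · rw [Finset.prod_eq_zero (Finset.mem_univ i)
            (by simp [hij, hik, hil, gmom_one])]
          simp [hij, hik, hil]

lemma delta2 {N : ℕ} (i j : Fin N) :
    (∏ m, gmom ((if m = i then 1 else 0) + (if m = j then 1 else 0)))
      = if i = j then (1:ℝ) else 0 := by
  by_cases hij : i = j
  · subst hij
    rw [prod_support _ {i} (by
        intro m hm
        simp only [Finset.mem_singleton] at hm
        simp [hm, gmom_zero])]
    simp [gmom_two]
  · rw [Finset.prod_eq_zero (Finset.mem_univ i) (by simp [hij, gmom_one])]
    simp [hij]

variable {N : ℕ}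

lemma integrable2 (i j : Fin N) : Integrable (fun x => x i * x j) (stdGaussian N) := by
  simp_rw [mono2_eq]
  exact std_integrable_pow _

lemma integrable4 (i j k l : Fin N) :
    Integrable (fun x => x i * x j * x k * x l) (stdGaussian N) := by
  simp_rw [mono4_eq]
  exact std_integrable_pow _

lemma E2mom (i j : Fin N) :
    ∫ x, x i * x j ∂(stdGaussian N) = if i = j then 1 else 0 := by
  simp_rw [mono2_eq]
  rw [std_integral_pow, delta2]

lemma E4mom (i j k l : Fin N) :
    ∫ x, x i * x j * x k * x l ∂(stdGaussian N)
    = (if i = j then (1:ℝ) else 0) * (if k = l then 1 else 0)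
      + (if i = k then 1 else 0) * (if j = l then 1 else 0)
      + (if i = l then 1 else 0) * (if j = k then 1 else 0) := by
  simp_rw [mono4_eq]
  rw [std_integral_pow, isserlis]

lemma quad_eq (Q : Matrix (Fin N) (Fin N) ℝ) (x : Fin N → ℝ) :
    x ⬝ᵥ Q.mulVec x = ∑ i, ∑ j, Q i j * (x i * x j) := by
  simp only [dotProduct, Matrix.mulVec, Finset.mul_sum]
  exact Finset.sum_congr rfl fun i _ => Finset.sum_congr rfl fun j _ => by ring

lemma integrable_quad (Q : Matrix (Fin N) (Fin N) ℝ) :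
    Integrable (fun x => x ⬝ᵥ Q.mulVec x) (stdGaussian N) := by
  simp_rw [quad_eq]
  exact integrable_finset_sum _ fun i _ =>
    integrable_finset_sum _ fun j _ => (integrable2 i j).const_mul _

lemma integral_quad (Q : Matrix (Fin N) (Fin N) ℝ) :
    ∫ x, x ⬝ᵥ Q.mulVec x ∂(stdGaussian N) = Q.trace := by
  simp_rw [quad_eq]
  rw [integral_finset_sum (f := fun i (x : Fin N → ℝ) => ∑ j, Q i j * (x i * x j)) _ fun i _ =>
    integrable_finset_sum _ fun j _ => (integrable2 i j).const_mul _]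
  have : ∀ i : Fin N, ∫ x, ∑ j, Q i j * (x i * x j) ∂(stdGaussian N)
      = ∑ j, Q i j * ∫ x, x i * x j ∂(stdGaussian N) := by
    intro i
    rw [integral_finset_sum _ fun j _ => (integrable2 i j).const_mul _]
    exact Finset.sum_congr rfl fun j _ => integral_const_mul _ _
  simp_rw [this, E2mom]
  simp [Matrix.trace, Matrix.diag, mul_ite]

lemma sq_expand (Q : Matrix (Fin N) (Fin N) ℝ) (x : Fin N → ℝ) :
    (x ⬝ᵥ Q.mulVec x) ^ 2
    = ∑ i, ∑ k, ∑ j, ∑ l, (Q i j * Q k l) * (x i * x j * x k * x l) := by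
  rw [sq, quad_eq, Finset.sum_mul_sum]
  refine Finset.sum_congr rfl fun i _ => Finset.sum_congr rfl fun k _ => ?_
  rw [Finset.sum_mul_sum]
  exact Finset.sum_congr rfl fun j _ => Finset.sum_congr rfl fun l _ => by ring

lemma integrable_quad_sq (Q : Matrix (Fin N) (Fin N) ℝ) :
    Integrable (fun x => (x ⬝ᵥ Q.mulVec x) ^ 2) (stdGaussian N) := by
  simp_rw [sq_expand]
  exact integrable_finset_sum _ fun i _ => integrable_finset_sum _ fun k _ =>
    integrable_finset_sum _ fun j _ => integrable_finset_sum _ fun l _ =>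
      (integrable4 i j k l).const_mul _

lemma integral_quad_sq (Q : Matrix (Fin N) (Fin N) ℝ) :
    ∫ x, (x ⬝ᵥ Q.mulVec x) ^ 2 ∂(stdGaussian N)
      = Q.trace ^ 2 + (Q * Qᵀ).trace + (Q * Q).trace := by
  simp_rw [sq_expand]
  rw [integral_finset_sum _ fun i _ => integrable_finset_sum _ fun k _ =>
    integrable_finset_sum _ fun j _ => integrable_finset_sum _ fun l _ =>
      (integrable4 i j k l).const_mul _]
  have h1 : ∀ i : Fin N, ∫ x, ∑ k, ∑ j, ∑ l, (Q i j * Q k l) * (x i * x j * x k * x l)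
        ∂(stdGaussian N)
      = ∑ k, ∑ j, ∑ l, (Q i j * Q k l) * ∫ x, x i * x j * x k * x l ∂(stdGaussian N) := by
    intro i
    rw [integral_finset_sum _ fun k _ => integrable_finset_sum _ fun j _ =>
      integrable_finset_sum _ fun l _ => (integrable4 i j k l).const_mul _]
    refine Finset.sum_congr rfl fun k _ => ?_
    rw [integral_finset_sum _ fun j _ =>
      integrable_finset_sum _ fun l _ => (integrable4 i j k l).const_mul _]
    refine Finset.sum_congr rfl fun j _ => ?_
    rw [integral_finset_sum _ fun l _ => (integrable4 i j k l).const_mul _]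
    exact Finset.sum_congr rfl fun l _ => integral_const_mul _ _
  simp_rw [h1, E4mom]
  simp only [mul_add, Finset.sum_add_distrib]
  congr 1
  · congr 1
    · -- first: trace^2
      simp only [mul_ite, mul_one, mul_zero, ite_mul, zero_mul, one_mul]
      simp only [Finset.sum_ite_eq, Finset.mem_univ, if_true]
      simp [Matrix.trace, Matrix.diag, sq, Finset.sum_mul_sum]
    · -- tr (Q * Qᵀ)
      simp only [mul_ite, mul_one, mul_zero, ite_mul, zero_mul, one_mul,
        Finset.sum_ite_irrel, Finset.sum_const_zero, Finset.sum_ite_eq,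
        Finset.mem_univ, if_true]
      simp [Matrix.trace, Matrix.diag, Matrix.mul_apply, Matrix.transpose_apply]
  · -- tr (Q * Q)
    simp only [mul_ite, mul_one, mul_zero, ite_mul, zero_mul, one_mul,
      Finset.sum_ite_irrel, Finset.sum_const_zero, Finset.sum_ite_eq,
      Finset.mem_univ, if_true]
    simp [Matrix.trace, Matrix.diag, Matrix.mul_apply]


variable {N : ℕ}

lemma measurable_mulVecFun (M : Matrix (Fin N) (Fin N) ℝ) :
    Measurable (fun x : Fin N → ℝ => M.mulVec x) := by
  apply measurable_pi_lambda
  intro i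
  show Measurable fun x : Fin N → ℝ => ∑ j, M i j * x j
  exact Finset.measurable_sum _ fun j _ => (measurable_pi_apply j).const_mul _

lemma measurable_quad (W : Matrix (Fin N) (Fin N) ℝ) :
    Measurable (fun y : Fin N → ℝ => y ⬝ᵥ W.mulVec y) := by
  simp_rw [quad_eq]
  exact Finset.measurable_sum _ fun i _ => Finset.measurable_sum _ fun j _ =>
    ((measurable_pi_apply i).mul (measurable_pi_apply j)).const_mul _

/-- Under the null with `V = Sg + τ₀* B Bᵀ` symmetric positive definite, the variance of
the score under `Y ~ N(0, V)` equals the information entry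
`I₂₂ = tr((Zᵀ V⁻¹ Z)²)/2`. -/
theorem stmt9 (n k0 k1 N : ℕ) (hn : 0 < n) (hk0 : 0 < k0) (hk1 : 0 < k1) (hN : 0 < N)
    (B : Matrix (Fin N) (Fin k0) ℝ) (Z : Matrix (Fin N) (Fin k1) ℝ)
    (Sg : Matrix (Fin N) (Fin N) ℝ) (hSg : Sg.PosDef)
    (τ0 : ℝ) (hτ0 : 0 ≤ τ0)
    (V : Matrix (Fin N) (Fin N) ℝ) (hVdef : V = Sg + τ0 • (B * Bᵀ)) (hV : V.PosDef)
    (S : (Fin N → ℝ) → ℝ)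
    (hS : ∀ y, S y = -(1 / 2) * ((Zᵀ * V⁻¹ * Z).trace
      - y ⬝ᵥ (V⁻¹ * Z * Zᵀ * V⁻¹).mulVec y)) :
    variance S (gaussian V) = ((Zᵀ * V⁻¹ * Z) * (Zᵀ * V⁻¹ * Z)).trace / 2 := by
  classical
  have hVps : V.PosSemidef := hV.posSemidef
  set W : Matrix (Fin N) (Fin N) ℝ := V⁻¹ * Z * Zᵀ * V⁻¹ with hW
  set c : ℝ := (Zᵀ * V⁻¹ * Z).trace with hc
  set M : Matrix (Fin N) (Fin N) ℝ := hVps.1.eigenvectorUnitary.1 *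
    diagonal ((√·) ∘ hVps.1.eigenvalues) *
    (star hVps.1.eigenvectorUnitary : Matrix (Fin N) (Fin N) ℝ) with hMdef
  have hmap : gaussian V = (stdGaussian N).map M.mulVec := by
    unfold gaussian
    rw [dif_pos hVps]
  set Q : Matrix (Fin N) (Fin N) ℝ := Mᵀ * W * M with hQ
  -- symmetry facts
  have hUU : (star hVps.1.eigenvectorUnitary : Matrix (Fin N) (Fin N) ℝ) *
      hVps.1.eigenvectorUnitary.1 = 1 := Unitary.coe_star_mul_self _
  have hstarU : (star hVps.1.eigenvectorUnitary : Matrix (Fin N) (Fin N) ℝ)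
      = (hVps.1.eigenvectorUnitary.1)ᵀ := by
    rw [Matrix.star_eq_conjTranspose, Matrix.conjTranspose_eq_transpose_of_trivial]
  have hMsym : Mᵀ = M := by
    rw [hMdef, hstarU]
    simp only [Matrix.transpose_mul, Matrix.transpose_transpose, Matrix.diagonal_transpose,
      Matrix.mul_assoc]
  have hVsym : Vᵀ = V := hVps.1
  have hMM : M * M = V := by
    conv_rhs => rw [hVps.1.spectral_theorem, Unitary.conjStarAlgAut_apply]
    rw [hMdef]
    have hD : diagonal ((√·) ∘ hVps.1.eigenvalues) * diagonal ((√·) ∘ hVps.1.eigenvalues)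
        = Matrix.diagonal (RCLike.ofReal ∘ hVps.1.eigenvalues : Fin N → ℝ) := by
      rw [Matrix.diagonal_mul_diagonal]
      congr 1
      funext i
      simp [Real.mul_self_sqrt (hVps.eigenvalues_nonneg i)]
    calc _ = hVps.1.eigenvectorUnitary.1 * diagonal ((√·) ∘ hVps.1.eigenvalues) *
          ((star hVps.1.eigenvectorUnitary : Matrix (Fin N) (Fin N) ℝ) *
            hVps.1.eigenvectorUnitary.1) * diagonal ((√·) ∘ hVps.1.eigenvalues) *
          (star hVps.1.eigenvectorUnitary : Matrix (Fin N) (Fin N) ℝ) := by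
            simp only [Matrix.mul_assoc]
      _ = _ := by rw [hUU, Matrix.mul_one, Matrix.mul_assoc _ (Matrix.diagonal _) (Matrix.diagonal _), hD]
  have hWsym : Wᵀ = W := by
    rw [hW]
    simp only [Matrix.transpose_mul, Matrix.transpose_nonsing_inv, hVsym,
      Matrix.transpose_transpose, Matrix.mul_assoc]
  have hQsym : Qᵀ = Q := by
    rw [hQ]
    simp only [Matrix.transpose_mul, hMsym, hWsym, Matrix.transpose_transpose,
      Matrix.mul_assoc]
  -- the composed score
  have hSfun : S = fun y => -(1/2) * (c - y ⬝ᵥ W.mulVec y) := funext hS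
  have hcomp : ∀ x, S (M.mulVec x) = -(1/2) * (c - x ⬝ᵥ Q.mulVec x) := by
    intro x
    rw [hSfun]
    have : (M.mulVec x) ⬝ᵥ W.mulVec (M.mulVec x) = x ⬝ᵥ Q.mulVec x := by
      rw [Matrix.mulVec_mulVec, Matrix.dotProduct_mulVec, ← Matrix.vecMul_transpose,
        Matrix.vecMul_vecMul, Matrix.dotProduct_mulVec x]
      simp only [hQ, hW, Matrix.mul_assoc]
    simp only [this]
  have hT := (measurable_mulVecFun M).aemeasurable (μ := stdGaussian N)
  have hSm : Measurable S := by
    rw [hSfun]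
    exact (measurable_const.sub (measurable_quad W)).const_mul _
  haveI : IsProbabilityMeasure ((stdGaussian N).map M.mulVec) :=
    Measure.isProbabilityMeasure_map hT
  -- integrability of the composed score squared
  have hST : Measurable fun x => S (M.mulVec x) := hSm.comp (measurable_mulVecFun M)
  have hint2 : Integrable (fun x => (S (M.mulVec x)) ^ 2) (stdGaussian N) := by
    have heq : (fun x => (S (M.mulVec x)) ^ 2)
        = fun x => (1/4) * c^2 - (c/2) * (x ⬝ᵥ Q.mulVec x)
            + (1/4) * (x ⬝ᵥ Q.mulVec x) ^ 2 := by
      funext x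
      rw [hcomp]
      ring
    rw [heq]
    exact ((integrable_const _).sub ((integrable_quad Q).const_mul _)).add
      ((integrable_quad_sq Q).const_mul _)
  have hmem : MemLp S 2 ((stdGaussian N).map M.mulVec) := by
    rw [memLp_map_measure_iff hSm.aestronglyMeasurable hT]
    exact (memLp_two_iff_integrable_sq hST.aestronglyMeasurable).mpr hint2
  rw [hmap, variance_eq_sub hmem]
  rw [integral_map hT hSm.aestronglyMeasurable,
    integral_map hT (by exact (hSm.pow_const 2).aestronglyMeasurable)]
  -- compute the two integrals
  have hI1 : ∫ x, S (M.mulVec x) ∂(stdGaussian N) = -(1/2) * (c - Q.trace) := by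
    simp_rw [hcomp]
    rw [integral_const_mul, integral_sub (integrable_const _) (integrable_quad Q),
      integral_const, integral_quad]
    simp
  have hI2 : ∫ x, (S (M.mulVec x)) ^ 2 ∂(stdGaussian N)
      = (1/4) * c^2 - (c/2) * Q.trace
        + (1/4) * (Q.trace ^ 2 + (Q * Qᵀ).trace + (Q * Q).trace) := by
    have heq : (fun x => (S (M.mulVec x)) ^ 2)
        = fun x => (1/4) * c^2 - (c/2) * (x ⬝ᵥ Q.mulVec x)
            + (1/4) * (x ⬝ᵥ Q.mulVec x) ^ 2 := by
      funext x
      rw [hcomp]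
      ring
    rw [heq]
    have hf1 : Integrable (fun x => (1:ℝ)/4 * c^2 - c/2 * (x ⬝ᵥ Q.mulVec x)) (stdGaussian N) :=
      (integrable_const _).sub ((integrable_quad Q).const_mul _)
    have hf2 : Integrable (fun x => (1:ℝ)/4 * (x ⬝ᵥ Q.mulVec x) ^ 2) (stdGaussian N) :=
      (integrable_quad_sq Q).const_mul _
    rw [integral_add hf1 hf2,
      integral_sub (integrable_const _) ((integrable_quad Q).const_mul _),
      integral_const, integral_const_mul, integral_const_mul,
      integral_quad, integral_quad_sq]
    simp
  have hSP : ∀ x : Fin N → ℝ, (S ^ 2) x = (S x) ^ 2 := fun x => rfl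
  simp only [hSP]
  rw [hI1, hI2]
  -- now pure algebra + matrix trace manipulations
  have hvar : (1/4) * c^2 - (c/2) * Q.trace
        + (1/4) * (Q.trace ^ 2 + (Q * Qᵀ).trace + (Q * Q).trace)
        - (-(1/2) * (c - Q.trace)) ^ 2
      = (1/2) * (Q * Q).trace := by
    rw [hQsym]
    ring
  rw [hvar]
  -- tr (Q * Q) = tr ((Zᵀ V⁻¹ Z)^2)
  have hVinv : V⁻¹ * V = 1 := Matrix.nonsing_inv_mul V (isUnit_iff_ne_zero.mpr hV.det_pos.ne')
  have hWV : W * V = V⁻¹ * Z * Zᵀ := by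
    rw [hW, Matrix.mul_assoc (V⁻¹ * Z * Zᵀ), hVinv, Matrix.mul_one]
  have hQQ : (Q * Q).trace = ((Zᵀ * V⁻¹ * Z) * (Zᵀ * V⁻¹ * Z)).trace := by
    have h1 : Q * Q = Mᵀ * (W * V * W) * M := by
      rw [hQ, ← hMM, hMsym]
      simp only [Matrix.mul_assoc]
    rw [h1, hMsym, Matrix.trace_mul_comm (M * (W * V * W)) M, ← Matrix.mul_assoc,
      ← Matrix.mul_assoc, Matrix.trace_mul_comm, hMM]
    -- now : tr (V * (W * V * W))? check; goal should reduce to tr(WV WV)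
    rw [hWV]
    have h2 : V * (V⁻¹ * Z * Zᵀ) = Z * Zᵀ := by
      rw [← Matrix.mul_assoc, ← Matrix.mul_assoc, Matrix.mul_nonsing_inv V
        (isUnit_iff_ne_zero.mpr hV.det_pos.ne'), Matrix.one_mul]
    rw [h2, show W * (Z * Zᵀ) = (W * Z) * Zᵀ from (Matrix.mul_assoc _ _ _).symm,
      Matrix.trace_mul_comm (W * Z) Zᵀ, hW]
    simp only [Matrix.mul_assoc]
  rw [hQQ]
  ring
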